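/- In any finite directed multigraph where every node other than a distinguished sink s satisfies outdegree ≥ indegree (flow conservation towards sources), and which contains no directed cycles, the edge set can be partitioned into edge-disjoint directed paths each ending at s. -/

import Mathlib

open Finset

lemma exists_cycle_of_closed_chain {V E : Type*} (src tgt : E → V)
    (m : List E) (hne : m ≠ []) (hnd : m.Nodup)
    (hch : List.Chain' (fun a b => tgt a = src b) m)
    (hwrap : tgt (m.getLast hne) = src (m.head hne)) :
    ∃ (n : ℕ) (c : Fin (n + 1) → E), Function.Injective c ∧
      ∀ i, tgt (c i) = src (c (i + 1)) := by
  obtain ⟨n, hlen⟩ : ∃ n, m.length = n + 1 :=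
    ⟨m.length - 1, by have := List.length_pos_iff.mpr hne; omega⟩
  refine ⟨n, fun i => m.get (Fin.cast hlen.symm i), ?_, ?_⟩
  · intro a b hab
    have := List.nodup_iff_injective_get.mp hnd hab
    exact Fin.cast_injective hlen.symm this
  · intro i
    by_cases hi : (i : ℕ) < n
    · have h1 : ((i + 1 : Fin (n + 1)) : ℕ) = (i : ℕ) + 1 :=
        Fin.val_add_one_of_lt (by rw [Fin.lt_iff_val_lt_val, Fin.val_last]; omega)
      have := List.isChain_iff_getElem.mp hch (i : ℕ) (by omega)
      convert this using 3 <;> simp [h1]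
    · have hin : (i : ℕ) = n := by omega
      have h0 : ((i + 1 : Fin (n + 1)) : ℕ) = 0 := by
        have : i = Fin.last n := by apply Fin.ext; simp [hin]
        simp [this]
      have hlast : m.get (Fin.cast hlen.symm i) = m.getLast hne := by
        rw [List.getLast_eq_getElem]
        simp [hin, hlen]
      have hhead : m.get (Fin.cast hlen.symm (i + 1)) = m.head hne := by
        have h2 : m.get (Fin.cast hlen.symm (i+1)) = m.get ⟨0, by omega⟩ := by
          congr 1; apply Fin.ext; simp [h0]
        rw [h2, List.get_mk_zero]
      show tgt (m.get (Fin.cast hlen.symm i)) = src (m.get (Fin.cast hlen.symm (i+1)))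
      rw [hlast, hhead]; exact hwrap

lemma chain_count {V E : Type*} [DecidableEq V] (src tgt : E → V) :
    ∀ (m : List E) (hne : m ≠ []), List.Chain' (fun a b => tgt a = src b) m →
    ∀ v : V, (m.countP (fun e => decide (src e = v)))
        + (if tgt (m.getLast hne) = v then 1 else 0)
      = (m.countP (fun e => decide (tgt e = v)))
        + (if src (m.head hne) = v then 1 else 0) := by
  intro m
  induction m with
  | nil => intro h; exact absurd rfl h
  | cons a t ih =>
    intro hne hch v
    cases t with
    | nil =>
      simp only [List.countP_cons, List.countP_nil, List.getLast_singleton,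
        List.head_cons]
      by_cases h1 : src a = v <;> by_cases h2 : tgt a = v <;> simp [h1, h2]
    | cons b t' =>
      have hch' : List.Chain' (fun a b => tgt a = src b) (b :: t') := hch.tail
      have hab : tgt a = src b := (List.isChain_cons_cons.mp hch).1
      have key := ih (by simp) hch' v
      have hlast : (a :: b :: t').getLast hne = (b :: t').getLast (by simp) :=
        List.getLast_cons _
      rw [hlast, List.head_cons]
      rw [List.head_cons, ← hab] at key
      simp only [List.countP_cons] at key ⊢
      by_cases h1 : src a = v <;> by_cases h2 : tgt a = v <;>
        by_cases h3 : tgt ((b :: t').getLast (by simp)) = v <;>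
        by_cases h4 : src b = v <;> by_cases h5 : tgt b = v <;>
        simp only [h1, h2, h3, h4, h5, if_true, if_false, decide_eq_true_eq,
          if_pos, if_neg, not_false_iff] at key ⊢ <;>
        omega

def GoodChain {E V : Type*} (src tgt : E → V) (k : ℕ) : Prop :=
  ∃ l : List E, (l ≠ [] ∧ l.Nodup ∧ List.Chain' (fun a b => tgt a = src b) l) ∧
    l.length = k

lemma main_aux {V : Type u} [DecidableEq V] (s : V) :
    ∀ (n : ℕ) (E : Type w) [Fintype E] [DecidableEq E] (src tgt : E → V),
    Fintype.card E ≤ n →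
    (∀ v : V, v ≠ s →
      (Finset.univ.filter fun e => tgt e = v).card ≤
        (Finset.univ.filter fun e => src e = v).card) →
    (¬ ∃ (n : ℕ) (c : Fin (n + 1) → E), Function.Injective c ∧
      ∀ i, tgt (c i) = src (c (i + 1))) →
    ∃ paths : List (List E),
      paths.flatten.Perm Finset.univ.toList ∧
      ∀ p ∈ paths, p ≠ [] ∧
        List.Chain' (fun a b => tgt a = src b) p ∧
        ∀ e, p.getLast? = some e → tgt e = s := by
  intro n
  induction n with
  | zero =>
    intro E _ _ src tgt hcard hdeg hacyc
    have : IsEmpty E := Fintype.card_eq_zero_iff.mp (by omega)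
    refine ⟨[], ?_, by simp⟩
    have : (Finset.univ : Finset E) = ∅ := Finset.univ_eq_empty
    simp [this]
  | succ n ih =>
    intro E _ _ src tgt hcard hdeg hacyc
    classical
    by_cases hE : IsEmpty E
    · refine ⟨[], ?_, by simp⟩
      have : (Finset.univ : Finset E) = ∅ := Finset.univ_eq_empty
      simp [this]
    rw [not_isEmpty_iff] at hE
    obtain ⟨e₀⟩ := hE
    haveI : Nonempty E := ⟨e₀⟩
    have hcardpos : (1 : ℕ) ≤ Fintype.card E := Fintype.card_pos
    obtain ⟨l, ⟨hne, hnd, hch⟩, hlenN⟩ :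
        GoodChain src tgt
          (Nat.findGreatest (GoodChain src tgt) (Fintype.card E)) :=
      Nat.findGreatest_spec hcardpos
        ⟨[e₀], ⟨by simp, by simp, List.isChain_singleton _⟩, rfl⟩
    have hmax : ∀ l' : List E, l' ≠ [] → l'.Nodup →
        List.Chain' (fun a b => tgt a = src b) l' → l'.length ≤ l.length := by
      intro l' h1 h2 h3
      rw [hlenN]
      by_contra h
      exact Nat.findGreatest_is_greatest (P := GoodChain src tgt)
        (n := Fintype.card E) (by omega) h2.length_le_card
        ⟨l', ⟨h1, h2, h3⟩, rfl⟩
    -- forward segment cycle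
    have hseg_fwd : ∀ f ∈ l, src f = tgt (l.getLast hne) → False := by
      intro f hf hsf
      obtain ⟨i, hilt, hi⟩ := List.mem_iff_getElem.mp hf
      have hmne : l.drop i ≠ [] := by
        rw [ne_eq, List.drop_eq_nil_iff]; omega
      have hmnd : (l.drop i).Nodup := hnd.sublist (List.drop_sublist _ _)
      have hmch : List.Chain' (fun a b => tgt a = src b) (l.drop i) :=
        hch.suffix (List.drop_suffix _ _)
      have hmhead : (l.drop i).head hmne = f := by
        rw [List.head_drop]; exact hi
      have hmlast : (l.drop i).getLast hmne = l.getLast hne :=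
        List.getLast_drop hmne
      exact hacyc (exists_cycle_of_closed_chain src tgt (l.drop i) hmne hmnd
        hmch (by rw [hmlast, hmhead, hsf]))
    -- backward segment cycle
    have hseg_bwd : ∀ f ∈ l, tgt f = src (l.head hne) → False := by
      intro f hf htf
      obtain ⟨i, hilt, hi⟩ := List.mem_iff_getElem.mp hf
      have hmne : l.take (i + 1) ≠ [] := by
        rw [ne_eq, List.take_eq_nil_iff]
        push_neg
        exact ⟨by omega, hne⟩
      have hmnd : (l.take (i + 1)).Nodup := hnd.sublist (List.take_sublist _ _)
      have hmch : List.Chain' (fun a b => tgt a = src b) (l.take (i + 1)) :=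
        hch.prefix (List.take_prefix _ _)
      have hmlen : (l.take (i + 1)).length = i + 1 := by
        rw [List.length_take]; omega
      have hmlast : (l.take (i + 1)).getLast hmne = f := by
        rw [List.getLast_eq_getElem]
        have h0 : (l.take (i+1))[(l.take (i+1)).length - 1] =
            (l.take (i+1))[i]'(by omega) := by
          congr 1
          omega
        rw [h0, List.getElem_take]
        exact hi
      have hmhead : (l.take (i + 1)).head hmne = l.head hne := by
        rw [List.head_eq_getElem, List.head_eq_getElem, List.getElem_take]
      exact hacyc (exists_cycle_of_closed_chain src tgt (l.take (i + 1)) hmne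
        hmnd hmch (by rw [hmlast, hmhead, htf]))
    -- last edge targets s
    have hlast_s : tgt (l.getLast hne) = s := by
      by_contra hw
      have h1 : 0 < (Finset.univ.filter
          fun e => tgt e = tgt (l.getLast hne)).card :=
        Finset.card_pos.mpr ⟨l.getLast hne, by simp⟩
      have h2 := hdeg _ hw
      have h3 : 0 < (Finset.univ.filter
          fun e => src e = tgt (l.getLast hne)).card := by omega
      obtain ⟨f, hfmem⟩ := Finset.card_pos.mp h3
      simp only [Finset.mem_filter, Finset.mem_univ, true_and] at hfmem
      by_cases hfl : f ∈ l
      · exact hseg_fwd f hfl hfmem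
      · have hnd' : (l ++ [f]).Nodup := by simp [List.nodup_append, hnd, hfl]; exact fun a ha h => hfl (h ▸ ha)
        have hch' : List.Chain' (fun a b => tgt a = src b) (l ++ [f]) := by
          rw [List.Chain', List.isChain_append]
          refine ⟨hch, List.isChain_singleton f, ?_⟩
          intro x hx y hy
          rw [List.getLast?_eq_getLast hne] at hx
          simp only [Option.mem_some_iff, List.head?_cons] at hx hy
          rw [← hx, ← hy]
          exact hfmem.symm
        have := hmax (l ++ [f]) (by simp) hnd' hch'
        simp at this
    -- head has no in-edges
    have hhead_indeg :
        (Finset.univ.filter fun e => tgt e = src (l.head hne)).card = 0 := by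
      rw [Finset.card_eq_zero, Finset.eq_empty_iff_forall_notMem]
      intro f hf
      simp only [Finset.mem_filter, Finset.mem_univ, true_and] at hf
      by_cases hfl : f ∈ l
      · exact hseg_bwd f hfl hf
      · have hnd' : (f :: l).Nodup := by simp [hnd, hfl]
        have hch' : List.Chain' (fun a b => tgt a = src b) (f :: l) := by
          rw [List.Chain', List.isChain_cons]
          refine ⟨?_, hch⟩
          intro y hy
          rw [List.head?_eq_head hne] at hy
          simp only [Option.mem_some_iff] at hy
          rw [← hy]
          exact hf
        have := hmax (f :: l) (by simp) hnd' hch'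
        simp at this
    -- split counting over the complement of l
    have card_split : ∀ (f : E → V) (v : V),
        (Finset.univ.filter fun e : {e : E // e ∉ l} => f e.1 = v).card
          + l.countP (fun e => decide (f e = v))
        = (Finset.univ.filter fun e : E => f e = v).card := by
      intro f v
      have h1 : (Finset.univ.filter fun e : {e : E // e ∉ l} => f e.1 = v).card
          = Fintype.card {e : {e : E // e ∉ l} // f e.1 = v} :=
        (Fintype.card_subtype _).symm
      have h2 : Fintype.card {e : {e : E // e ∉ l} // f e.1 = v}
          = Fintype.card {e : E // e ∉ l ∧ f e = v} :=
        Fintype.card_congr (Equiv.subtypeSubtypeEquivSubtypeInter (fun e => e ∉ l) (fun e => f e = v))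
      have h3 : Fintype.card {e : E // e ∉ l ∧ f e = v}
          = (Finset.univ.filter fun e : E => e ∉ l ∧ f e = v).card :=
        Fintype.card_subtype _
      have h4 : l.countP (fun e => decide (f e = v))
          = (Finset.univ.filter fun e : E => e ∈ l ∧ f e = v).card := by
        rw [List.countP_eq_length_filter,
          ← List.toFinset_card_of_nodup (hnd.filter _)]
        congr 1
        ext e
        simp only [List.toFinset_filter, Finset.mem_filter, List.mem_toFinset,
          Finset.mem_univ, true_and, decide_eq_true_eq]
      have h5 := Finset.card_filter_add_card_filter_not
        (s := Finset.univ.filter fun e : E => f e = v) (p := fun e => e ∈ l)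
      rw [Finset.filter_filter, Finset.filter_filter] at h5
      have c1 : (Finset.univ.filter fun e : E => e ∉ l ∧ f e = v)
          = Finset.univ.filter fun e : E => f e = v ∧ ¬ e ∈ l := by
        ext e; simp [and_comm]
      have c2 : (Finset.univ.filter fun e : E => e ∈ l ∧ f e = v)
          = Finset.univ.filter fun e : E => f e = v ∧ e ∈ l := by
        ext e; simp [and_comm]
      rw [h1, h2, h3, h4, c1, c2]
      omega
    have hcard' : Fintype.card {e : E // e ∉ l} ≤ n := by
      have hlt : Fintype.card {e : E // e ∉ l} < Fintype.card E :=
        Fintype.card_subtype_lt (x := l.head hne) (by simp [List.head_mem hne])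
      omega
    have hdeg' : ∀ v : V, v ≠ s →
        (Finset.univ.filter fun e : {e : E // e ∉ l} => tgt e.1 = v).card ≤
        (Finset.univ.filter fun e : {e : E // e ∉ l} => src e.1 = v).card := by
      intro v hv
      have hsrc := card_split src v
      have htgt := card_split tgt v
      have hcnt := chain_count src tgt l hne hch v
      rw [hlast_s] at hcnt
      by_cases hv0 : src (l.head hne) = v
      · have h0 : (Finset.univ.filter fun e : E => tgt e = v).card = 0 := by
          rw [← hv0]; exact hhead_indeg
        omega
      · have hs0 : (if s = v then 1 else 0) = 0 :=
          if_neg (fun h => hv h.symm)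
        have hh0 : (if src (l.head hne) = v then 1 else 0) = 0 := if_neg hv0
        rw [hs0, hh0] at hcnt
        have hdv := hdeg v hv
        omega
    have hacyc' : ¬ ∃ (k : ℕ) (c : Fin (k + 1) → {e : E // e ∉ l}),
        Function.Injective c ∧
        ∀ i, tgt (c i).1 = src (c (i + 1)).1 := by
      rintro ⟨k, c, hcinj, hccyc⟩
      exact hacyc ⟨k, fun i => (c i).1,
        fun a b hab => hcinj (Subtype.ext hab), hccyc⟩
    obtain ⟨paths', hperm', hprop'⟩ := ih {e : E // e ∉ l}
      (fun e => src e.1) (fun e => tgt e.1) hcard' hdeg' hacyc'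
    refine ⟨l :: paths'.map (List.map Subtype.val), ?_, ?_⟩
    · have hflat : (l :: paths'.map (List.map Subtype.val)).flatten
          = l ++ paths'.flatten.map Subtype.val := by
        rw [List.flatten_cons, List.map_flatten]
      rw [hflat]
      have h1 : (paths'.flatten.map Subtype.val).Perm
          ((Finset.univ : Finset {e : E // e ∉ l}).toList.map Subtype.val) :=
        hperm'.map _
      refine (List.Perm.append_left l h1).trans ?_
      apply List.perm_of_nodup_nodup_toFinset_eq
      · rw [List.nodup_append]
        refine ⟨hnd, (Finset.nodup_toList _).map Subtype.val_injective, ?_⟩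
        intro a ha b hb
        rw [List.mem_map] at hb
        obtain ⟨e', _, rfl⟩ := hb
        exact fun h => e'.2 (h ▸ ha)
      · exact Finset.nodup_toList _
      · ext e
        simp only [List.toFinset_append, Finset.mem_union, List.mem_toFinset,
          List.mem_map, Finset.mem_toList, Finset.mem_univ, iff_true]
        by_cases he : e ∈ l
        · exact Or.inl he
        · exact Or.inr ⟨⟨e, he⟩, by simp⟩
    · intro p hp
      rw [List.mem_cons] at hp
      rcases hp with rfl | hp
      · refine ⟨hne, hch, ?_⟩
        intro e hegl
        rw [List.getLast?_eq_getLast hne] at hegl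
        have : p.getLast hne = e := by injection hegl
        rw [← this]
        exact hlast_s
      · rw [List.mem_map] at hp
        obtain ⟨q, hq, rfl⟩ := hp
        obtain ⟨hq1, hq2, hq3⟩ := hprop' q hq
        refine ⟨fun h => hq1 (List.eq_nil_of_length_eq_zero
          (by simpa using congrArg List.length h)), ?_, ?_⟩
        · rw [List.Chain', List.isChain_map]
          exact hq2
        · intro e he
          rw [List.getLast?_map] at he
          cases hql : q.getLast? with
          | none => rw [hql] at he; simp at he
          | some e' =>
            rw [hql] at he
            simp only [Option.map_some] at he
            have he2 : e'.1 = e := by injection he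
            rw [← he2]
            exact hq3 e' hql

/-- In a finite directed multigraph (edges `E` with endpoints `src`, `tgt` over
vertices `V`) with a distinguished sink `s`, if every vertex `v ≠ s` has
indegree at most outdegree, and the graph has no directed cycle, then the edge
set can be partitioned into edge-disjoint directed paths each ending at `s`. -/
theorem acyclic_multigraph_path_decomposition {V E : Type*}
    [Fintype E] [DecidableEq V] [DecidableEq E]
    (src tgt : E → V) (s : V)
    (hdeg : ∀ v : V, v ≠ s →
      (Finset.univ.filter fun e => tgt e = v).card ≤
        (Finset.univ.filter fun e => src e = v).card)
    (hacyc : ¬ ∃ (n : ℕ) (c : Fin (n + 1) → E), Function.Injective c ∧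
      ∀ i, tgt (c i) = src (c (i + 1))) :
    ∃ paths : List (List E),
      paths.flatten.Perm Finset.univ.toList ∧
      ∀ p ∈ paths, p ≠ [] ∧
        List.Chain' (fun a b => tgt a = src b) p ∧
        ∀ e, p.getLast? = some e → tgt e = s :=
  main_aux s (Fintype.card E) E src tgt le_rfl hdeg hacyc
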